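/- arXiv:2010.06305 — 5 statements merged into one kernel-verified Lean document; each statement's English description precedes it below -/
import Mathlib

section
/- A tuple (X_1,…,X_K) of n×n complex matrices is simultaneously diagonalizable (there exists an invertible S with S⁻¹X_kS diagonal for all k) if and only if there exists an invertible S ∈ ℂ^{n×n} such that the nullspace of Ξ(X_1,…,X_K) contains the range of the Khatri–Rao product S^{-⊤} ⊙ S. -/
open Matrix Kronecker

/-- Column-stacking vectorization: `vecM X (j, i) = X i j`
(the pair `(j, i)` encodes position `(j-1)*n + i`). -/
def vecM {n : ℕ} (X : Matrix (Fin n) (Fin n) ℂ) : Fin n × Fin n → ℂ :=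
  fun p => X p.2 p.1

/-- The Kronecker sum `I_n ⊗ X - Xᵀ ⊗ I_n`. -/
def kronSum {n : ℕ} (X : Matrix (Fin n) (Fin n) ℂ) :
    Matrix (Fin n × Fin n) (Fin n × Fin n) ℂ :=
  (1 : Matrix (Fin n) (Fin n) ℂ) ⊗ₖ X - Xᵀ ⊗ₖ (1 : Matrix (Fin n) (Fin n) ℂ)

/-- `Ξ(X_1, …, X_K)`: the vertical stack of the `I_n ⊗ X_k - X_kᵀ ⊗ I_n`. -/
def XiM {n K : ℕ} (X : Fin K → Matrix (Fin n) (Fin n) ℂ) :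
    Matrix (Fin K × (Fin n × Fin n)) (Fin n × Fin n) ℂ :=
  fun p q => kronSum (X p.1) p.2 q

/-- Simultaneous diagonalizability of a tuple. -/
def SimDiag {n K : ℕ} (X : Fin K → Matrix (Fin n) (Fin n) ℂ) : Prop :=
  ∃ S : Matrix (Fin n) (Fin n) ℂ, IsUnit S ∧ ∀ k, (S⁻¹ * X k * S).IsDiag

/-- `X` has `n` distinct eigenvalues. -/
def HasDistinctEigenvalues {n : ℕ} (X : Matrix (Fin n) (Fin n) ℂ) : Prop :=
  ∃ μ : Fin n → ℂ, Function.Injective μ ∧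
    ∀ i, Module.End.HasEigenvalue (Matrix.mulVecLin X) (μ i)

/-- Squared Frobenius norm. -/
noncomputable def frobSq {m p : Type*} [Fintype m] [Fintype p] (X : Matrix m p ℂ) : ℝ :=
  ∑ i, ∑ j, ‖X i j‖ ^ 2

/-- Khatri–Rao (column-wise Kronecker) product. -/
def khatriRao {n : ℕ} (X Y : Matrix (Fin n) (Fin n) ℂ) :
    Matrix (Fin n × Fin n) (Fin n) ℂ :=
  fun p j => X p.1 j * Y p.2 j

lemma vecKR {n : ℕ} (S : Matrix (Fin n) (Fin n) ℂ) (v : Fin n → ℂ) :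
    (khatriRao (S⁻¹)ᵀ S).mulVec v = vecM (S * Matrix.diagonal v * S⁻¹) := by
  funext p
  obtain ⟨j, i⟩ := p
  simp only [mulVec, dotProduct, khatriRao, vecM, Matrix.mul_apply, transpose_apply,
    diagonal_apply, mul_ite, mul_zero, Finset.sum_ite_eq, Finset.sum_ite_eq', Finset.mem_univ, if_true]
  exact Finset.sum_congr rfl fun c _ => by ring

lemma Xi_apply {n K : ℕ} (X : Fin K → Matrix (Fin n) (Fin n) ℂ)
    (M : Matrix (Fin n) (Fin n) ℂ) (k : Fin K) (i j : Fin n) :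
    ((XiM X).mulVec (vecM M)) (k, (j, i)) = (X k * M) i j - (M * X k) i j := by
  simp only [mulVec, dotProduct, XiM, kronSum, vecM, Matrix.sub_apply, kroneckerMap_apply,
    one_apply, Matrix.mul_apply, Fintype.sum_prod_type, sub_mul]
  simp only [Finset.sum_sub_distrib]
  congr 1
  · rw [Finset.sum_comm]
    simp [ite_mul]
  · simp [ite_mul, mul_comm]

lemma Xi_zero_iff {n K : ℕ} (X : Fin K → Matrix (Fin n) (Fin n) ℂ)
    (M : Matrix (Fin n) (Fin n) ℂ) :
    (XiM X).mulVec (vecM M) = 0 ↔ ∀ k, X k * M = M * X k := by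
  constructor
  · intro h k
    ext i j
    have := congrFun h (k, (j, i))
    rw [Xi_apply] at this
    simpa [sub_eq_zero] using this
  · intro h
    funext p
    obtain ⟨k, j, i⟩ := p
    rw [Xi_apply, h k]
    simp

theorem simDiag_iff_nullspace_contains_khatriRao_range {n K : ℕ}
    (X : Fin K → Matrix (Fin n) (Fin n) ℂ) :
    SimDiag X ↔ ∃ S : Matrix (Fin n) (Fin n) ℂ, IsUnit S ∧
      ∀ v : Fin n → ℂ, (XiM X).mulVec ((khatriRao (S⁻¹)ᵀ S).mulVec v) = 0 := by
  constructor
  · rintro ⟨S, hS, hdiag⟩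
    refine ⟨S, hS, fun v => ?_⟩
    rw [vecKR, Xi_zero_iff]
    intro k
    have hdet : IsUnit S.det := (Matrix.isUnit_iff_isUnit_det S).mp hS
    have hcomm : (S⁻¹ * X k * S) * Matrix.diagonal v = Matrix.diagonal v * (S⁻¹ * X k * S) := by
      ext i j
      rcases eq_or_ne i j with rfl | hij
      · simp [Matrix.mul_diagonal, Matrix.diagonal_mul, mul_comm]
      · simp [Matrix.mul_diagonal, Matrix.diagonal_mul, (hdiag k) hij]
    calc X k * (S * Matrix.diagonal v * S⁻¹)
        = S * ((S⁻¹ * X k * S) * Matrix.diagonal v) * S⁻¹ := by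
          simp only [← Matrix.mul_assoc, Matrix.mul_nonsing_inv S hdet, Matrix.one_mul]
      _ = S * (Matrix.diagonal v * (S⁻¹ * X k * S)) * S⁻¹ := by rw [hcomm]
      _ = (S * Matrix.diagonal v * S⁻¹) * X k := by
          simp only [← Matrix.mul_assoc]
          rw [Matrix.mul_assoc _ S S⁻¹, Matrix.mul_nonsing_inv S hdet, Matrix.mul_one]
  · rintro ⟨S, hS, h⟩
    have hdet : IsUnit S.det := (Matrix.isUnit_iff_isUnit_det S).mp hS
    refine ⟨S, hS, fun k i j hij => ?_⟩
    have hv := h (Pi.single j 1)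
    rw [vecKR, Xi_zero_iff] at hv
    have hk := hv k
    have hcomm : (S⁻¹ * X k * S) * Matrix.diagonal (Pi.single j 1)
        = Matrix.diagonal (Pi.single j 1) * (S⁻¹ * X k * S) := by
      calc (S⁻¹ * X k * S) * Matrix.diagonal (Pi.single j 1)
          = S⁻¹ * ((X k * (S * Matrix.diagonal (Pi.single j 1) * S⁻¹)) * S) := by
            simp only [Matrix.mul_assoc]
            rw [Matrix.nonsing_inv_mul S hdet]
            simp only [Matrix.mul_one, Matrix.mul_assoc]
        _ = S⁻¹ * (((S * Matrix.diagonal (Pi.single j 1) * S⁻¹) * X k) * S) := by rw [hk]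
        _ = Matrix.diagonal (Pi.single j 1) * (S⁻¹ * X k * S) := by
            simp only [← Matrix.mul_assoc, Matrix.nonsing_inv_mul S hdet, Matrix.one_mul]
    have := congrFun (congrFun hcomm i) j
    simpa [Matrix.mul_diagonal, Matrix.diagonal_mul, Pi.single_eq_same,
      Pi.single_eq_of_ne hij] using this
end

section
/- If a tuple (X_1,…,X_K) of n×n complex matrices is simultaneously diagonalizable, then rank(Ξ(X_1,…,X_K)) ≤ n² − n. -/
open Matrix Kronecker

lemma kronSum_mulVec {n : ℕ} (A M : Matrix (Fin n) (Fin n) ℂ) :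
    (kronSum A).mulVec (vecM M) = vecM (A * M - M * A) := by
  funext p
  obtain ⟨j, i⟩ := p
  simp only [kronSum, vecM, Matrix.mulVec, dotProduct, Matrix.sub_apply,
    Matrix.kroneckerMap_apply, Matrix.one_apply, Matrix.transpose_apply,
    Fintype.sum_prod_type, Matrix.mul_apply, sub_mul, ite_mul, one_mul, zero_mul,
    mul_ite, mul_one, mul_zero, Finset.sum_sub_distrib, Finset.sum_ite_eq,
    Finset.sum_ite_eq', Finset.mem_univ, if_true]
  congr 1
  · rw [Finset.sum_comm]; simp
  · exact Finset.sum_congr rfl fun x _ => mul_comm _ _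

theorem simDiag_rank_le {n K : ℕ} (X : Fin K → Matrix (Fin n) (Fin n) ℂ)
    (hX : SimDiag X) : (XiM X).rank ≤ n ^ 2 - n := by
  obtain ⟨S, hS, hdiag⟩ := hX
  have hdet : IsUnit S.det := (Matrix.isUnit_iff_isUnit_det S).mp hS
  -- the linear map c ↦ vecM (S * diagonal c * S⁻¹)
  let φ : (Fin n → ℂ) →ₗ[ℂ] (Fin n × Fin n → ℂ) :=
    { toFun := fun c => vecM (S * Matrix.diagonal c * S⁻¹)
      map_add' := by
        intro a b
        have : S * Matrix.diagonal (a + b) * S⁻¹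
            = S * Matrix.diagonal a * S⁻¹ + S * Matrix.diagonal b * S⁻¹ := by
          have hd : Matrix.diagonal (a + b) = Matrix.diagonal a + Matrix.diagonal b := by
            ext i j
            by_cases h : i = j <;> simp [Matrix.diagonal, h]
          rw [hd, Matrix.mul_add, Matrix.add_mul]
        funext p
        simp [vecM, this, Matrix.add_apply]
      map_smul' := by
        intro r a
        funext p
        simp [vecM, Matrix.diagonal_smul, Matrix.mul_smul, Matrix.smul_mul] }
  have hφinj : Function.Injective φ := by
    intro a b h
    have h' : S * Matrix.diagonal a * S⁻¹ = S * Matrix.diagonal b * S⁻¹ := by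
      funext i j
      exact congrFun h (j, i)
    have h'' : Matrix.diagonal a = Matrix.diagonal b := by
      have := congrArg (fun T => S⁻¹ * T * S) h'
      simpa only [Matrix.nonsing_inv_mul_cancel_right _ _ hdet, ← Matrix.mul_assoc,
        Matrix.nonsing_inv_mul_cancel_left _ _ hdet,
        Matrix.nonsing_inv_mul _ hdet, Matrix.one_mul] using this
    exact Matrix.diagonal_injective h''
  have hker : ∀ c, φ c ∈ LinearMap.ker (XiM X).mulVecLin := by
    intro c
    rw [LinearMap.mem_ker]
    have hcomm : ∀ k, X k * (S * Matrix.diagonal c * S⁻¹)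
        = (S * Matrix.diagonal c * S⁻¹) * X k := by
      intro k
      have hXk : X k = S * (S⁻¹ * X k * S) * S⁻¹ := by
        rw [← Matrix.mul_assoc, Matrix.mul_nonsing_inv_cancel_left _ _ hdet,
          Matrix.mul_nonsing_inv_cancel_right _ _ hdet]
      have hd : S⁻¹ * X k * S = Matrix.diagonal (Matrix.diag (S⁻¹ * X k * S)) :=
        ((hdiag k).diagonal_diag).symm
      conv_lhs => rw [hXk, hd]
      conv_rhs => rw [hXk, hd]
      have key : Matrix.diagonal (Matrix.diag (S⁻¹ * X k * S)) * Matrix.diagonal c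
          = Matrix.diagonal c * Matrix.diagonal (Matrix.diag (S⁻¹ * X k * S)) := by
        rw [Matrix.diagonal_mul_diagonal, Matrix.diagonal_mul_diagonal]
        exact congrArg Matrix.diagonal (funext fun i => mul_comm _ _)
      have conj : ∀ A B : Matrix (Fin n) (Fin n) ℂ,
          (S * A * S⁻¹) * (S * B * S⁻¹) = S * (A * B) * S⁻¹ := by
        intro A B
        rw [Matrix.mul_assoc S A S⁻¹, Matrix.mul_assoc S B S⁻¹,
          Matrix.mul_assoc S (A * S⁻¹) _, Matrix.mul_assoc A S⁻¹ _,
          Matrix.nonsing_inv_mul_cancel_left _ _ hdet, ← Matrix.mul_assoc A B S⁻¹,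
          ← Matrix.mul_assoc S (A * B) S⁻¹]
      rw [conj, conj, key]
    funext kp
    obtain ⟨k, p⟩ := kp
    have : (XiM X).mulVecLin (φ c) (k, p)
        = (kronSum (X k)).mulVec (vecM (S * Matrix.diagonal c * S⁻¹)) p := rfl
    rw [this, kronSum_mulVec, hcomm k]
    simp [vecM]
  let f : (Fin n → ℂ) →ₗ[ℂ] LinearMap.ker (XiM X).mulVecLin :=
    LinearMap.codRestrict _ φ hker
  have hfinj : Function.Injective f := by
    intro a b h
    apply hφinj
    exact congrArg Subtype.val h
  have h1 : n ≤ Module.finrank ℂ (LinearMap.ker (XiM X).mulVecLin) := by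
    have := LinearMap.finrank_le_finrank_of_injective hfinj
    simpa using this
  have h2 := LinearMap.finrank_range_add_finrank_ker (XiM X).mulVecLin
  have h3 : Module.finrank ℂ (Fin n × Fin n → ℂ) = n * n := by
    simp [Module.finrank_fintype_fun_eq_card]
  rw [h3] at h2
  have hr : (XiM X).rank = Module.finrank ℂ (LinearMap.range (XiM X).mulVecLin) := rfl
  rw [hr]
  have : n ^ 2 = n * n := sq n
  omega
end

section
/- With Ĥ = Ξ(X⋄) given, the tuple Z = (Z_1,…,Z_K) with Z_k = X⋄_k + (tr(X_k − X⋄_k)/n) I_n minimizes Σ_k ‖X_k − Y_k‖_F² over all (Y_1,…,Y_K) satisfying Ξ(Y_1,…,Y_K) = Ĥ, i.e., Z is the Frobenius-norm projection of (X_1,…,X_K) onto the affine fiber Ξ⁻¹(Ĥ). -/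
open Matrix Kronecker

lemma kronSum_add {n : ℕ} (A B : Matrix (Fin n) (Fin n) ℂ) :
    kronSum (A + B) = kronSum A + kronSum B := by
  ext p q
  simp only [kronSum, Matrix.sub_apply, Matrix.add_apply, Matrix.kroneckerMap_apply,
    Matrix.one_apply, Matrix.transpose_apply]
  by_cases h1 : p.1 = q.1 <;> by_cases h2 : p.2 = q.2 <;> simp [h1, h2] <;> ring

lemma kronSum_smul_one {n : ℕ} (c : ℂ) :
    kronSum (c • (1 : Matrix (Fin n) (Fin n) ℂ)) = 0 := by
  ext p q
  simp only [kronSum, Matrix.sub_apply, Matrix.kroneckerMap_apply, Matrix.one_apply,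
    Matrix.transpose_apply, Matrix.smul_apply, Matrix.zero_apply, smul_eq_mul]
  by_cases h1 : p.1 = q.1 <;> by_cases h2 : p.2 = q.2 <;> simp [h1, h2] <;>
    exact fun h => absurd h.symm h1

lemma kronSum_eq_zero {n : ℕ} (hn : 0 < n) (A : Matrix (Fin n) (Fin n) ℂ)
    (h : kronSum A = 0) : ∃ c : ℂ, A = c • 1 := by
  set i0 : Fin n := ⟨0, hn⟩
  refine ⟨A i0 i0, ?_⟩
  ext i j
  have := congrFun (congrFun h (i0, i)) (i0, j)
  simp [kronSum, Matrix.kroneckerMap_apply, Matrix.one_apply] at this ⊢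
  by_cases hij : i = j <;> simp [hij] at this ⊢
  · linear_combination this
  · linear_combination this

lemma real_mean_min {n : ℕ} (hn : 0 < n) (x : Fin n → ℝ) (t : ℝ) :
    ∑ i, (x i - (∑ j, x j) / n) ^ 2 ≤ ∑ i, (x i - t) ^ 2 := by
  have hn' : (0:ℝ) < n := Nat.cast_pos.mpr hn
  set s := ∑ j, x j with hs
  have expand : ∀ u : ℝ, ∑ i, (x i - u) ^ 2
      = ∑ i, (x i) ^ 2 - 2 * u * s + n * u ^ 2 := by
    intro u
    have : ∀ i : Fin n, (x i - u) ^ 2 = (x i) ^ 2 - 2 * u * (x i) + u ^ 2 := by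
      intro i; ring
    rw [Finset.sum_congr rfl (fun i _ => this i)]
    rw [Finset.sum_add_distrib, Finset.sum_sub_distrib, Finset.sum_const,
      Finset.card_fin, ← Finset.mul_sum]
    ring
  rw [expand, expand]
  have h2 : (n:ℝ) * (s/n)^2 = s * (s/n) := by field_simp
  have key : (n:ℝ) * (t - s/n)^2 = n*t^2 - 2*t*s + s*(s/n) := by field_simp; ring
  have hpos := mul_nonneg hn'.le (sq_nonneg (t - s/n))
  linarith [hpos, key, h2]

lemma complex_mean_min {n : ℕ} (hn : 0 < n) (d : Fin n → ℂ) (c : ℂ) :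
    ∑ i, Complex.normSq (d i - (∑ j, d j) / n) ≤ ∑ i, Complex.normSq (d i - c) := by
  have hre : ((∑ j, d j) / (n:ℂ)).re = (∑ j, (d j).re) / n := by
    rw [show ((n:ℂ)) = ((n:ℝ):ℂ) by push_cast; rfl, Complex.div_ofReal_re, Complex.re_sum]
  have him : ((∑ j, d j) / (n:ℂ)).im = (∑ j, (d j).im) / n := by
    rw [show ((n:ℂ)) = ((n:ℝ):ℂ) by push_cast; rfl, Complex.div_ofReal_im, Complex.im_sum]
  have expand : ∀ (u : ℂ), ∑ i, Complex.normSq (d i - u)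
      = ∑ i, ((d i).re - u.re) ^ 2 + ∑ i, ((d i).im - u.im) ^ 2 := by
    intro u
    rw [← Finset.sum_add_distrib]
    refine Finset.sum_congr rfl (fun i _ => ?_)
    simp [Complex.normSq_apply, Complex.sub_re, Complex.sub_im]
    ring
  rw [expand, expand, hre, him]
  exact add_le_add (real_mean_min hn _ _) (real_mean_min hn _ _)

lemma frobSq_sub_smul_one {n : ℕ} (D : Matrix (Fin n) (Fin n) ℂ) (u : ℂ) :
    frobSq (D - u • 1) = (∑ i, ∑ j, if i = j then 0 else Complex.normSq (D i j))
      + ∑ i, Complex.normSq (D i i - u) := by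
  have hns : ∀ z : ℂ, ‖z‖ ^ 2 = Complex.normSq z := fun z => by
    rw [Complex.sq_norm]
  unfold frobSq
  rw [← Finset.sum_add_distrib]
  refine Finset.sum_congr rfl (fun i _ => ?_)
  have : ∀ j : Fin n, ‖(D - u • 1) i j‖ ^ 2
      = (if i = j then 0 else Complex.normSq (D i j))
        + (if i = j then Complex.normSq (D i i - u) else 0) := by
    intro j
    by_cases hij : i = j <;>
      simp [hij, Matrix.sub_apply, Matrix.smul_apply, Matrix.one_apply, hns, Complex.sq_norm]
  rw [Finset.sum_congr rfl (fun j _ => this j), Finset.sum_add_distrib,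
    Finset.sum_ite_eq Finset.univ i (fun _ => Complex.normSq (D i i - u))]
  simp

theorem projection_onto_Xi_fiber {n K : ℕ} (hn : 0 < n)
    (Xd X Z : Fin K → Matrix (Fin n) (Fin n) ℂ)
    (hZ : ∀ k, Z k = Xd k + ((Matrix.trace (X k - Xd k)) / (n : ℂ)) •
      (1 : Matrix (Fin n) (Fin n) ℂ)) :
    XiM Z = XiM Xd ∧
      ∀ Y : Fin K → Matrix (Fin n) (Fin n) ℂ, XiM Y = XiM Xd →
        ∑ k, frobSq (X k - Z k) ≤ ∑ k, frobSq (X k - Y k) := by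
  have hkz : ∀ k, kronSum (Z k) = kronSum (Xd k) := by
    intro k
    rw [hZ k, kronSum_add, kronSum_smul_one, add_zero]
  constructor
  · funext p q
    show kronSum (Z p.1) p.2 q = kronSum (Xd p.1) p.2 q
    rw [hkz p.1]
  · intro Y hY
    refine Finset.sum_le_sum (fun k _ => ?_)
    -- kronSum (Y k) = kronSum (Xd k)
    have hk : kronSum (Y k) = kronSum (Xd k) := by
      ext p q
      exact congrFun (congrFun hY (k, p)) q
    have hzero : kronSum (Y k - Xd k) = 0 := by
      have := kronSum_add (Y k - Xd k) (Xd k)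
      rw [sub_add_cancel, hk] at this
      linear_combination (norm := abel) this.symm
    obtain ⟨c, hc⟩ := kronSum_eq_zero hn _ hzero
    have hYk : Y k = Xd k + c • 1 := by
      rw [← hc]; abel
    set D := X k - Xd k with hD
    have hXZ : X k - Z k = D - ((Matrix.trace D) / (n : ℂ)) • 1 := by
      rw [hZ k, hD]; abel
    have hXY : X k - Y k = D - c • 1 := by
      rw [hYk, hD]; abel
    rw [hXZ, hXY, frobSq_sub_smul_one, frobSq_sub_smul_one]
    refine add_le_add le_rfl ?_
    have htr : Matrix.trace D = ∑ j, D j j := by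
      simp [Matrix.trace, Matrix.diag]
    rw [htr]
    exact complex_mean_min hn (fun i => D i i) c
end

section
/- Let (X_1,…,X_K) ∈ (ℂ^{n×n})^K and let Z = (Z_1,…,Z_K) be its projection onto the affine fiber Ξ⁻¹(Ĥ) for some Ĥ in the range of Ξ. Then Σ_{k=1}^K ‖X_k − Z_k‖_F² = ‖Ξ(X_1,…,X_K) − Ĥ‖_F² / (2n). -/
open Matrix Kronecker

lemma kronSum_apply {n : ℕ} (W : Matrix (Fin n) (Fin n) ℂ) (a b c d : Fin n) :
    kronSum W (a,b) (c,d) = (if a = c then W b d else 0) - (if b = d then W c a else 0) := by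
  simp only [kronSum, Matrix.sub_apply, kroneckerMap_apply, Matrix.one_apply, Matrix.transpose_apply]
  split_ifs <;> ring

lemma kernel_lemma {n : ℕ} (hn : 0 < n) (W : Matrix (Fin n) (Fin n) ℂ)
    (h : ∀ p q, kronSum W p q = 0) : ∃ c : ℂ, W = c • (1 : Matrix (Fin n) (Fin n) ℂ) := by
  set i0 : Fin n := ⟨0, hn⟩
  refine ⟨W i0 i0, ?_⟩
  ext i j
  rcases eq_or_ne i j with rfl | hij
  · have := h (i0, i) (i0, i)
    rw [kronSum_apply] at this
    simp only [if_pos rfl, if_true] at this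
    simp [Matrix.one_apply]
    linear_combination this
  · have := h (i0, i) (i0, j)
    rw [kronSum_apply] at this
    simp only [if_pos rfl, if_neg hij] at this
    simp [Matrix.one_apply, hij, sub_zero] at this ⊢
    exact this

lemma kronSum_sub {n : ℕ} (A B : Matrix (Fin n) (Fin n) ℂ) :
    kronSum (A - B) = kronSum A - kronSum B := by
  ext ⟨a,b⟩ ⟨c,d⟩
  simp only [Matrix.sub_apply, kronSum_apply]
  split_ifs <;> ring

lemma norm_sq_eq_normSq (z : ℂ) : ‖z‖ ^ 2 = Complex.normSq z := by
  rw [Complex.sq_norm]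

lemma frobSq_eq_normSq {m p : Type*} [Fintype m] [Fintype p] (X : Matrix m p ℂ) :
    frobSq X = ∑ i, ∑ j, Complex.normSq (X i j) := by
  simp only [frobSq, norm_sq_eq_normSq]

lemma sum_normSq_shift {n : ℕ} (f : Fin n → ℂ) (d m : ℂ) (h : (n : ℂ) * m = ∑ i, f i) :
    ∑ i, Complex.normSq (f i - d)
      = ∑ i, Complex.normSq (f i) - n * Complex.normSq m + n * Complex.normSq (d - m) := by
  have hre : ∑ i, (f i).re = n * m.re := by
    have := congrArg Complex.re h
    simpa [Complex.re_sum] using this.symm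
  have him : ∑ i, (f i).im = n * m.im := by
    have := congrArg Complex.im h
    simpa [Complex.im_sum] using this.symm
  have step : ∀ i, Complex.normSq (f i - d)
      = Complex.normSq (f i) - 2 * ((f i).re * d.re + (f i).im * d.im) + Complex.normSq d := by
    intro i
    simp [Complex.normSq_apply, Complex.sub_re, Complex.sub_im]
    ring
  rw [Finset.sum_congr rfl (fun i _ => step i)]
  rw [Finset.sum_add_distrib, Finset.sum_sub_distrib, ← Finset.mul_sum, Finset.sum_add_distrib,
    ← Finset.sum_mul, ← Finset.sum_mul, hre, him]
  simp only [Finset.sum_const, Finset.card_univ, Fintype.card_fin, nsmul_eq_mul]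
  simp only [Complex.normSq_apply, Complex.sub_re, Complex.sub_im]
  ring

lemma frobSq_sub_smul_one_s16 {n : ℕ} (W : Matrix (Fin n) (Fin n) ℂ) (e m : ℂ)
    (h : (n : ℂ) * m = Matrix.trace W) :
    frobSq (W - e • (1 : Matrix (Fin n) (Fin n) ℂ))
      = frobSq W - n * Complex.normSq m + n * Complex.normSq (e - m) := by
  have hdiag : (n : ℂ) * m = ∑ i, W i i := by
    simpa [Matrix.trace, Matrix.diag] using h
  have row : ∀ i : Fin n,
      ∑ j, Complex.normSq ((W - e • (1 : Matrix (Fin n) (Fin n) ℂ)) i j)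
        = ∑ j, Complex.normSq (W i j)
          + (Complex.normSq (W i i - e) - Complex.normSq (W i i)) := by
    intro i
    rw [← Finset.add_sum_erase _ _ (Finset.mem_univ i),
      ← Finset.add_sum_erase Finset.univ (fun j => Complex.normSq (W i j)) (Finset.mem_univ i)]
    have hmain : (W - e • (1 : Matrix (Fin n) (Fin n) ℂ)) i i = W i i - e := by
      simp [Matrix.sub_apply, Matrix.smul_apply, Matrix.one_apply]
    have hoff : ∀ j ∈ Finset.univ.erase i,
        Complex.normSq ((W - e • (1 : Matrix (Fin n) (Fin n) ℂ)) i j)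
          = Complex.normSq (W i j) := by
      intro j hj
      have : i ≠ j := (Finset.ne_of_mem_erase hj).symm
      simp [Matrix.sub_apply, Matrix.smul_apply, Matrix.one_apply, this]
    rw [hmain, Finset.sum_congr rfl hoff]
    ring
  rw [frobSq_eq_normSq, frobSq_eq_normSq, Finset.sum_congr rfl (fun i _ => row i),
    Finset.sum_add_distrib, Finset.sum_sub_distrib]
  have := sum_normSq_shift (fun i => W i i) e m hdiag
  rw [this]
  ring

lemma normSq_ite_sub (P Q : Prop) [Decidable P] [Decidable Q] (x y : ℂ) :
    Complex.normSq ((if P then x else 0) - (if Q then y else 0))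
      = (if P then Complex.normSq x else 0) + (if Q then Complex.normSq y else 0)
        - (if P ∧ Q then 2 * (x * (starRingEnd ℂ) y).re else 0) := by
  split_ifs with h1 h2 h3 <;>
    simp_all [Complex.normSq_sub, Complex.normSq_apply, Complex.mul_re, Complex.conj_re,
      Complex.conj_im] <;> ring

lemma frobSq_kronSum {n : ℕ} (W : Matrix (Fin n) (Fin n) ℂ) :
    frobSq (kronSum W) = 2 * n * frobSq W - 2 * Complex.normSq (Matrix.trace W) := by
  rw [frobSq_eq_normSq]
  have expand : ∀ (p q : Fin n × Fin n), Complex.normSq (kronSum W p q)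
      = (if p.1 = q.1 then Complex.normSq (W p.2 q.2) else 0)
        + (if p.2 = q.2 then Complex.normSq (W q.1 p.1) else 0)
        - (if p.1 = q.1 ∧ p.2 = q.2 then 2 * (W p.2 q.2 * (starRingEnd ℂ) (W q.1 p.1)).re else 0) := by
    rintro ⟨a,b⟩ ⟨c,d⟩
    rw [kronSum_apply, normSq_ite_sub]
  rw [Finset.sum_congr rfl (fun p _ => Finset.sum_congr rfl (fun q _ => expand p q))]
  have h1 : ∑ p : Fin n × Fin n, ∑ q : Fin n × Fin n,
      (if p.1 = q.1 then Complex.normSq (W p.2 q.2) else 0) = n * frobSq W := by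
    rw [frobSq_eq_normSq, Fintype.sum_prod_type]
    simp_rw [Fintype.sum_prod_type]
    simp [Finset.sum_ite_eq, Finset.mul_sum]
  have h2 : ∑ p : Fin n × Fin n, ∑ q : Fin n × Fin n,
      (if p.2 = q.2 then Complex.normSq (W q.1 p.1) else 0) = n * frobSq W := by
    rw [frobSq_eq_normSq, Fintype.sum_prod_type]
    simp_rw [Fintype.sum_prod_type]
    rw [Finset.sum_comm]
    simp [Finset.sum_ite_eq, Finset.mul_sum]
    rw [Finset.sum_comm]
  have h3 : ∑ p : Fin n × Fin n, ∑ q : Fin n × Fin n,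
      (if p.1 = q.1 ∧ p.2 = q.2 then 2 * (W p.2 q.2 * (starRingEnd ℂ) (W q.1 p.1)).re else 0)
        = 2 * Complex.normSq (Matrix.trace W) := by
    simp_rw [← Prod.ext_iff]
    simp only [Finset.sum_ite_eq, Finset.mem_univ, if_true]
    have : ∑ p : Fin n × Fin n, 2 * (W p.2 p.2 * (starRingEnd ℂ) (W p.1 p.1)).re
        = 2 * ((∑ b, W b b) * (starRingEnd ℂ) (∑ a, W a a)).re := by
      rw [map_sum, Finset.sum_mul, Complex.re_sum, Finset.mul_sum, Fintype.sum_prod_type,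
        Finset.sum_comm]
      congr 1
      ext b
      rw [Finset.mul_sum, Complex.re_sum, Finset.mul_sum]
    rw [this, Complex.mul_conj, Complex.ofReal_re]
    congr 1
  simp_rw [Finset.sum_sub_distrib, Finset.sum_add_distrib]
  rw [h1, h2, h3]
  ring

lemma frobSq_XiM_sub {n K : ℕ} (X Xd : Fin K → Matrix (Fin n) (Fin n) ℂ) :
    frobSq (XiM X - XiM Xd) = ∑ k, frobSq (kronSum (X k - Xd k)) := by
  simp only [frobSq]
  rw [Fintype.sum_prod_type]
  apply Finset.sum_congr rfl
  intro k _
  apply Finset.sum_congr rfl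
  intro p _
  apply Finset.sum_congr rfl
  intro q _
  congr 2
  rw [kronSum_sub]
  simp [XiM, Matrix.sub_apply]

theorem projection_distance_formula {n K : ℕ} (hn : 0 < n)
    (X Xd Z : Fin K → Matrix (Fin n) (Fin n) ℂ)
    (hZ : XiM Z = XiM Xd)
    (hmin : ∀ Y : Fin K → Matrix (Fin n) (Fin n) ℂ, XiM Y = XiM Xd →
      ∑ k, frobSq (X k - Z k) ≤ ∑ k, frobSq (X k - Y k)) :
    ∑ k, frobSq (X k - Z k) = frobSq (XiM X - XiM Xd) / (2 * n) := by
  have hn0 : (n : ℂ) ≠ 0 := Nat.cast_ne_zero.mpr hn.ne'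
  have hnr : (n : ℝ) ≠ 0 := Nat.cast_ne_zero.mpr hn.ne'
  set W : Fin K → Matrix (Fin n) (Fin n) ℂ := fun k => X k - Xd k with hW
  set m : Fin K → ℂ := fun k => Matrix.trace (W k) / n with hm
  have hmk : ∀ k, (n : ℂ) * m k = Matrix.trace (W k) := by
    intro k; simp only [hm]; field_simp
  -- Z k = Xd k + d k • 1
  have hker : ∀ k, ∃ c : ℂ, Z k - Xd k = c • (1 : Matrix (Fin n) (Fin n) ℂ) := by
    intro k
    apply kernel_lemma hn
    intro p q
    have h0 := congrFun (congrFun hZ (k, p)) q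
    simp only [XiM] at h0
    rw [kronSum_sub]
    simp [Matrix.sub_apply, h0]
  choose d hd using hker
  have hXZ : ∀ k, X k - Z k = W k - d k • (1 : Matrix (Fin n) (Fin n) ℂ) := by
    intro k
    have := hd k
    rw [hW]
    rw [sub_eq_iff_eq_add] at this
    rw [this]
    beta_reduce
    module
  -- the comparison point Y
  set Y : Fin K → Matrix (Fin n) (Fin n) ℂ := fun k => Xd k + m k • 1 with hY
  have hYXi : XiM Y = XiM Xd := by
    funext p q
    simp only [XiM, hY]
    rw [kronSum_add, kronSum_smul_one]
    simp
  have hXY : ∀ k, X k - Y k = W k - m k • (1 : Matrix (Fin n) (Fin n) ℂ) := by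
    intro k
    simp only [hY, hW]
    abel
  have valZ : ∑ k, frobSq (X k - Z k)
      = ∑ k, (frobSq (W k) - n * Complex.normSq (m k) + n * Complex.normSq (d k - m k)) := by
    apply Finset.sum_congr rfl
    intro k _
    rw [hXZ k, frobSq_sub_smul_one_s16 _ _ _ (hmk k)]
  have valY : ∑ k, frobSq (X k - Y k)
      = ∑ k, (frobSq (W k) - n * Complex.normSq (m k)) := by
    apply Finset.sum_congr rfl
    intro k _
    rw [hXY k, frobSq_sub_smul_one_s16 _ _ _ (hmk k)]
    simp
  have extra0 : ∑ k, (n : ℝ) * Complex.normSq (d k - m k) = 0 := by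
    have le1 := hmin Y hYXi
    rw [valZ, valY, Finset.sum_add_distrib] at le1
    have h2 : ∑ k, (n : ℝ) * Complex.normSq (d k - m k) ≤ 0 := by linarith
    have h3 : 0 ≤ ∑ k, (n : ℝ) * Complex.normSq (d k - m k) :=
      Finset.sum_nonneg fun k _ => mul_nonneg (Nat.cast_nonneg n) (Complex.normSq_nonneg _)
    linarith
  have hLHS : ∑ k, frobSq (X k - Z k) = ∑ k, (frobSq (W k) - n * Complex.normSq (m k)) := by
    rw [valZ, Finset.sum_add_distrib, extra0, add_zero]
  rw [hLHS, frobSq_XiM_sub, eq_div_iff (by positivity)]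
  rw [Finset.sum_mul]
  apply Finset.sum_congr rfl
  intro k _
  rw [frobSq_kronSum]
  have htm : Complex.normSq (Matrix.trace (W k)) = (n : ℝ) ^ 2 * Complex.normSq (m k) := by
    rw [← hmk k, Complex.normSq_mul, Complex.normSq_natCast]
    ring
  rw [htm]
  ring
end

section
/- Suppose (X_1,…,X_K) are n×n complex matrices, simultaneously diagonalized by invertible S as Λ_k = S⁻¹X_kS = diag(λ_1^{(k)},…,λ_n^{(k)}). Then rank(Ξ(X_1,…,X_K)) = rank(Ξ(Λ_1,…,Λ_K)), and rank(Ξ(X_1,…,X_K)) = n² − n if and only if for every p ≠ q the vectors (λ_p^{(1)},…,λ_p^{(K)}) and (λ_q^{(1)},…,λ_q^{(K)}) differ. -/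
open Matrix Kronecker

lemma kronSum_diagonal {n : ℕ} (d : Fin n → ℂ) :
    kronSum (Matrix.diagonal d) = Matrix.diagonal (fun q => d q.2 - d q.1) := by
  ext ⟨a,b⟩ ⟨c,e⟩
  simp only [kronSum, Matrix.sub_apply, Matrix.kroneckerMap_apply, Matrix.one_apply,
    Matrix.transpose_apply, Matrix.diagonal_apply, Prod.mk.injEq]
  by_cases h1 : a = c <;> by_cases h2 : b = e <;> simp [h1, h2]
  exact fun h => absurd h.symm h1

lemma XiM_rank_eq {n K : ℕ} (X : Fin K → Matrix (Fin n) (Fin n) ℂ)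
    (S : Matrix (Fin n) (Fin n) ℂ) (hS : IsUnit S)
    (lam : Fin K → Fin n → ℂ)
    (hdiag : ∀ k, S⁻¹ * X k * S = Matrix.diagonal (lam k)) :
    (XiM X).rank = (XiM (fun k => Matrix.diagonal (lam k))).rank := by
  have hdet : IsUnit S.det := (Matrix.isUnit_iff_isUnit_det S).mp hS
  have hSS : S * S⁻¹ = 1 := Matrix.mul_nonsing_inv S hdet
  have hSS' : S⁻¹ * S = 1 := Matrix.nonsing_inv_mul S hdet
  set P : Matrix (Fin n × Fin n) (Fin n × Fin n) ℂ := (S⁻¹)ᵀ ⊗ₖ S with hP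
  set Q : Matrix (Fin n × Fin n) (Fin n × Fin n) ℂ := Sᵀ ⊗ₖ S⁻¹ with hQ
  have hPQ : P * Q = 1 := by
    rw [hP, hQ, ← Matrix.mul_kronecker_mul, ← Matrix.transpose_mul, hSS,
      Matrix.transpose_one, Matrix.one_kronecker_one]
  have hQP : Q * P = 1 := by
    rw [hP, hQ, ← Matrix.mul_kronecker_mul, ← Matrix.transpose_mul, hSS',
      Matrix.transpose_one, Matrix.one_kronecker_one]
  have hX : ∀ k, X k = S * Matrix.diagonal (lam k) * S⁻¹ := by
    intro k
    rw [← hdiag k]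
    calc X k = S * (S⁻¹ * X k * S) * S⁻¹ := by
          rw [show S * (S⁻¹ * X k * S) * S⁻¹ = (S * S⁻¹) * X k * (S * S⁻¹) by
            simp only [Matrix.mul_assoc], hSS]
          simp
    _ = _ := rfl
  have hkron : ∀ k, kronSum (X k) = P * kronSum (Matrix.diagonal (lam k)) * Q := by
    intro k
    have h1 : P * ((1 : Matrix (Fin n) (Fin n) ℂ) ⊗ₖ Matrix.diagonal (lam k)) * Q
        = (1 : Matrix (Fin n) (Fin n) ℂ) ⊗ₖ X k := by
      rw [hP, hQ, ← Matrix.mul_kronecker_mul, ← Matrix.mul_kronecker_mul,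
        Matrix.mul_one, ← Matrix.transpose_mul, hSS, Matrix.transpose_one, ← hX k]
    have h2 : P * ((Matrix.diagonal (lam k))ᵀ ⊗ₖ (1 : Matrix (Fin n) (Fin n) ℂ)) * Q
        = (X k)ᵀ ⊗ₖ (1 : Matrix (Fin n) (Fin n) ℂ) := by
      rw [hP, hQ, ← Matrix.mul_kronecker_mul, ← Matrix.mul_kronecker_mul,
        Matrix.mul_one, hSS, Matrix.diagonal_transpose]
      rw [hX k, Matrix.transpose_mul, Matrix.transpose_mul, Matrix.diagonal_transpose,
        Matrix.mul_assoc]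
    rw [kronSum, kronSum, Matrix.mul_sub, Matrix.sub_mul, h1, h2]
  set M : Matrix (Fin K × (Fin n × Fin n)) (Fin K × (Fin n × Fin n)) ℂ :=
    (Matrix.blockDiagonal (fun _ : Fin K => P)).submatrix Prod.swap Prod.swap with hM
  set M' : Matrix (Fin K × (Fin n × Fin n)) (Fin K × (Fin n × Fin n)) ℂ :=
    (Matrix.blockDiagonal (fun _ : Fin K => Q)).submatrix Prod.swap Prod.swap with hM'
  have hMM' : M * M' = 1 := by
    rw [hM, hM',
      show (Prod.swap : Fin K × (Fin n × Fin n) → (Fin n × Fin n) × Fin K)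
        = ⇑(Equiv.prodComm (Fin K) (Fin n × Fin n)) from rfl,
      Matrix.submatrix_mul_equiv, ← Matrix.blockDiagonal_mul]
    rw [show (fun _ : Fin K => P * Q)
        = (1 : Fin K → Matrix (Fin n × Fin n) (Fin n × Fin n) ℂ) by
          funext x; exact hPQ,
      Matrix.blockDiagonal_one]
    exact Matrix.submatrix_one_equiv (Equiv.prodComm (Fin K) (Fin n × Fin n))
  have key : ∀ (B : Matrix (Fin K × (Fin n × Fin n)) (Fin n × Fin n) ℂ) k r q,
      (M * B) (k, r) q = ∑ s, P r s * B (k, s) q := by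
    intro B k r q
    rw [Matrix.mul_apply, Fintype.sum_prod_type, Finset.sum_comm]
    simp only [hM, Matrix.submatrix_apply, Prod.swap_prod_mk, Matrix.blockDiagonal_apply,
      ite_mul, zero_mul, Finset.sum_ite_eq, Finset.mem_univ, if_true]
  have hfac : XiM X = M * (XiM (fun k => Matrix.diagonal (lam k)) * Q) := by
    ext ⟨k, r⟩ q
    show kronSum (X k) r q = _
    rw [hkron k, Matrix.mul_assoc, key]
    simp [Matrix.mul_apply, XiM]
  have hMdet : IsUnit M.det := by
    apply IsUnit.of_mul_eq_one (a := M.det) M'.det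
    rw [← Matrix.det_mul, hMM', Matrix.det_one]
  have hQdet : IsUnit Q.det := by
    apply IsUnit.of_mul_eq_one (a := Q.det) P.det
    rw [← Matrix.det_mul, hQP, Matrix.det_one]
  rw [hfac, Matrix.rank_mul_eq_right_of_isUnit_det M _ hMdet,
    Matrix.rank_mul_eq_left_of_isUnit_det Q _ hQdet]

open ComplexOrder in
lemma XiM_diag_rank {n K : ℕ} (lam : Fin K → Fin n → ℂ) :
    (XiM (fun k => Matrix.diagonal (lam k))).rank
      = Fintype.card {q : Fin n × Fin n // ∃ k, lam k q.2 ≠ lam k q.1} := by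
  classical
  set A := XiM (fun k => Matrix.diagonal (lam k)) with hA
  set w : Fin n × Fin n → ℂ :=
    fun q => ∑ k, (starRingEnd ℂ) (lam k q.2 - lam k q.1) * (lam k q.2 - lam k q.1) with hw
  have hAe : ∀ (p : Fin K × (Fin n × Fin n)) q, A p q
      = if p.2 = q then lam p.1 q.2 - lam p.1 q.1 else 0 := by
    rintro ⟨k, r⟩ q
    show kronSum (Matrix.diagonal (lam k)) r q = _
    rw [kronSum_diagonal, Matrix.diagonal_apply]
    by_cases h : r = q <;> simp [h]
  have hAA : Aᴴ * A = Matrix.diagonal w := by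
    ext q q'
    rw [Matrix.mul_apply, Matrix.diagonal_apply]
    by_cases h : q = q'
    · subst h
      rw [if_pos rfl, hw, Fintype.sum_prod_type]
      refine Finset.sum_congr rfl fun k _ => ?_
      simp [Matrix.conjTranspose_apply, hAe, apply_ite (star : ℂ → ℂ), ite_mul, mul_ite,
        Finset.sum_ite_eq']
    · rw [if_neg h]
      apply Finset.sum_eq_zero
      rintro ⟨k, r⟩ _
      rw [Matrix.conjTranspose_apply, hAe, hAe]
      by_cases h1 : r = q <;> by_cases h2 : r = q' <;> simp_all
  have h1 : A.rank = (Matrix.diagonal w).rank := by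
    rw [← hAA, Matrix.rank_conjTranspose_mul_self]
  rw [h1, Matrix.rank_diagonal]
  apply Fintype.card_congr
  apply Equiv.subtypeEquivRight
  intro q
  have hwq : w q = ((∑ k, Complex.normSq (lam k q.2 - lam k q.1) : ℝ) : ℂ) := by
    rw [hw]
    push_cast
    refine Finset.sum_congr rfl fun k _ => ?_
    rw [Complex.normSq_eq_conj_mul_self]
  rw [hwq, ne_eq, Complex.ofReal_eq_zero]
  rw [Finset.sum_eq_zero_iff_of_nonneg (fun k _ => Complex.normSq_nonneg _)]
  push_neg
  constructor
  · rintro ⟨k, _, h⟩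
    exact ⟨k, fun he => h (by simp [he])⟩
  · rintro ⟨k, h⟩
    exact ⟨k, Finset.mem_univ k, fun he => h (sub_eq_zero.mp (Complex.normSq_eq_zero.mp he))⟩

lemma card_diag_eq {n : ℕ} : Fintype.card {q : Fin n × Fin n // q.1 = q.2} = n := by
  have e : {q : Fin n × Fin n // q.1 = q.2} ≃ Fin n :=
    { toFun := fun q => q.1.1
      invFun := fun i => ⟨(i, i), rfl⟩
      left_inv := by rintro ⟨⟨a, b⟩, h⟩; cases h; rfl
      right_inv := fun i => rfl }
  rw [Fintype.card_congr e, Fintype.card_fin]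

lemma card_offdiag {n : ℕ} :
    Fintype.card {q : Fin n × Fin n // q.1 ≠ q.2} = n ^ 2 - n := by
  classical
  have := Fintype.card_subtype_compl (fun q : Fin n × Fin n => q.1 = q.2)
  rw [this, card_diag_eq, Fintype.card_prod, Fintype.card_fin, ← pow_two]

theorem rank_Xi_of_simultaneous_diagonalization {n K : ℕ}
    (X : Fin K → Matrix (Fin n) (Fin n) ℂ)
    (S : Matrix (Fin n) (Fin n) ℂ) (hS : IsUnit S)
    (lam : Fin K → Fin n → ℂ)
    (hdiag : ∀ k, S⁻¹ * X k * S = Matrix.diagonal (lam k)) :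
    (XiM X).rank = (XiM (fun k => Matrix.diagonal (lam k))).rank ∧
      ((XiM X).rank = n ^ 2 - n ↔
        ∀ p q : Fin n, p ≠ q → (fun k => lam k p) ≠ (fun k => lam k q)) := by
  classical
  have hr := XiM_rank_eq X S hS lam hdiag
  refine ⟨hr, ?_⟩
  rw [hr, XiM_diag_rank]
  constructor
  · intro hcard p q hpq
    set A := Finset.univ.filter (fun q : Fin n × Fin n => ∃ k, lam k q.2 ≠ lam k q.1) with hA
    set B := Finset.univ.filter (fun q : Fin n × Fin n => q.1 ≠ q.2) with hB
    have hAB : A ⊆ B := by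
      intro r hr
      simp only [hA, hB, Finset.mem_filter, Finset.mem_univ, true_and] at hr ⊢
      obtain ⟨k, hk⟩ := hr
      exact fun he => hk (by rw [he])
    have hcardA : A.card = n ^ 2 - n := by
      rw [← hcard, Fintype.card_subtype]
    have hcardB : B.card = n ^ 2 - n := by
      rw [← card_offdiag (n := n), Fintype.card_subtype]
    have hBA : B = A :=
      (Finset.eq_of_subset_of_card_le hAB (by rw [hcardA, hcardB])).symm
    have hmem : (q, p) ∈ A := by
      rw [← hBA]
      simp [hB, Ne.symm hpq]
    simp only [hA, Finset.mem_filter, Finset.mem_univ, true_and] at hmem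
    obtain ⟨k, hk⟩ := hmem
    intro hfun
    exact hk (congrFun hfun k)
  · intro hcond
    have hiff : ∀ q : Fin n × Fin n, (∃ k, lam k q.2 ≠ lam k q.1) ↔ q.1 ≠ q.2 := by
      intro q
      constructor
      · rintro ⟨k, hk⟩ he
        exact hk (by rw [he])
      · intro hne
        have h := hcond q.2 q.1 (Ne.symm hne)
        rwa [Function.ne_iff] at h
    calc Fintype.card {q : Fin n × Fin n // ∃ k, lam k q.2 ≠ lam k q.1}
        = Fintype.card {q : Fin n × Fin n // q.1 ≠ q.2} :=
          Fintype.card_congr (Equiv.subtypeEquivRight hiff)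
      _ = n ^ 2 - n := card_offdiag
end
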